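/- Let E be a real Banach space, let β, γ ≥ 0 with β + γ < 1, let (η_t)_{t≥0} be a summable sequence of nonnegative reals, let B > 0, and let (h_t)_{t≥0} be a sequence in E with ‖h_t‖ ≤ B for all t. Define the sequence (F_t) by F_0 = 0, F_1 = η_0·h_0, and F_{t+2} = β·F_{t+1} + γ·F_t + η_{t+1}·h_{t+1} for all t ≥ 0. Then (F_t) is a Cauchy sequence and converges in norm to a limit F⋆ ∈ E. -/

import Mathlib

/-- Convergence of the Fibonacci-type recursive ensemble in a real Banach space:
if `β, γ ≥ 0` with `β + γ < 1`, the step sizes `η_t ≥ 0` are summable, and the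
base learners are uniformly bounded by `B`, then the sequence `F_t` defined by
`F_0 = 0`, `F_1 = η_0 • h_0`, `F_{t+2} = β • F_{t+1} + γ • F_t + η_{t+1} • h_{t+1}`
is Cauchy and converges in norm to some limit `F⋆ ∈ E`. -/
theorem fibonacci_ensemble_converges
    {E : Type*} [NormedAddCommGroup E] [NormedSpace ℝ E] [CompleteSpace E]
    (β γ : ℝ) (hβ : 0 ≤ β) (hγ : 0 ≤ γ) (hβγ : β + γ < 1)
    (η : ℕ → ℝ) (hη : ∀ t, 0 ≤ η t) (hηsum : Summable η)
    (B : ℝ) (hB : 0 < B) (h : ℕ → E) (hh : ∀ t, ‖h t‖ ≤ B)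
    (F : ℕ → E) (hF0 : F 0 = 0) (hF1 : F 1 = η 0 • h 0)
    (hFrec : ∀ t : ℕ, F (t + 2) = β • F (t + 1) + γ • F t + η (t + 1) • h (t + 1)) :
    CauchySeq F ∧ ∃ Fstar : E, Filter.Tendsto F Filter.atTop (nhds Fstar) := by
  set d : ℕ → ℝ := fun t => dist (F t) (F (t + 1)) with hd
  have hd0 : ∀ t, 0 ≤ d t := fun t => dist_nonneg
  set T := ∑' t, η t with hT
  have hT0 : 0 ≤ T := tsum_nonneg hη
  have hηle : ∀ k n : ℕ, ∑ i ∈ Finset.range n, η (i + k) ≤ T := by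
    intro k n
    have := Summable.sum_le_tsum ((Finset.range n).image (· + k)) (fun i _ => hη i) hηsum
    rwa [Finset.sum_image (by intro a _ b _ hab; simp only at hab; omega)] at this
  -- pointwise recursion on distances
  have h1 : ∀ t, d (t + 2) ≤ β * d (t + 1) + γ * d t + B * (η (t + 2) + η (t + 1)) := by
    intro t
    have key : F (t + 2) - F (t + 3) =
        β • (F (t + 1) - F (t + 2)) + γ • (F t - F (t + 1)) +
          (η (t + 1) • h (t + 1) - η (t + 2) • h (t + 2)) := by
      have e1 := hFrec t
      have e2 := hFrec (t + 1)
      have e3 : t + 1 + 2 = t + 3 := rfl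
      have e4 : t + 1 + 1 = t + 2 := rfl
      rw [e3, e4] at e2
      rw [e2, e1]
      module
    have hn : d (t + 2) = ‖F (t + 2) - F (t + 3)‖ := by
      simp [hd, dist_eq_norm]
    rw [hn, key]
    calc ‖β • (F (t + 1) - F (t + 2)) + γ • (F t - F (t + 1)) +
          (η (t + 1) • h (t + 1) - η (t + 2) • h (t + 2))‖
        ≤ ‖β • (F (t + 1) - F (t + 2))‖ + ‖γ • (F t - F (t + 1))‖ +
          ‖η (t + 1) • h (t + 1) - η (t + 2) • h (t + 2)‖ := by
          exact norm_add₃_le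
      _ ≤ β * d (t + 1) + γ * d t + B * (η (t + 2) + η (t + 1)) := by
          gcongr ?a + ?b + ?c
          · rw [norm_smul, Real.norm_of_nonneg hβ, hd]
            simp [dist_eq_norm]
          · rw [norm_smul, Real.norm_of_nonneg hγ, hd]
            simp [dist_eq_norm]
          · calc ‖η (t + 1) • h (t + 1) - η (t + 2) • h (t + 2)‖
                ≤ ‖η (t + 1) • h (t + 1)‖ + ‖η (t + 2) • h (t + 2)‖ := norm_sub_le _ _
              _ ≤ η (t + 1) * B + η (t + 2) * B := by
                  gcongr ?a1 + ?a2
                  · rw [norm_smul, Real.norm_of_nonneg (hη _)]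
                    exact mul_le_mul_of_nonneg_left (hh _) (hη _)
                  · rw [norm_smul, Real.norm_of_nonneg (hη _)]
                    exact mul_le_mul_of_nonneg_left (hh _) (hη _)
              _ = B * (η (t + 2) + η (t + 1)) := by ring
  have hden : 0 < 1 - (β + γ) := by linarith
  set K := (d 0 + d 1 + 2 * (B * T)) / (1 - (β + γ)) with hK
  have hsum_bound : ∀ n, ∑ i ∈ Finset.range n, d i ≤ K := by
    have mono : ∀ m k : ℕ, m ≤ k →
        ∑ i ∈ Finset.range m, d i ≤ ∑ i ∈ Finset.range k, d i := by
      intro m k hmk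
      exact Finset.sum_le_sum_of_subset_of_nonneg (Finset.range_subset_range.2 hmk)
        (fun i _ _ => hd0 i)
    have main : ∀ n, ∑ i ∈ Finset.range (n + 2), d i ≤ K := by
      intro n
      set A := ∑ i ∈ Finset.range (n + 2), d i with hA
      have e2 : ∑ i ∈ Finset.range (n + 1), d i
          = ∑ i ∈ Finset.range n, d (i + 1) + d 0 := Finset.sum_range_succ' d n
      have e1 : A = ∑ i ∈ Finset.range (n + 1), d (i + 1) + d 0 :=
        Finset.sum_range_succ' d (n + 1)
      have e1' : ∑ i ∈ Finset.range (n + 1), d (i + 1)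
          = ∑ i ∈ Finset.range n, d (i + 2) + d 1 :=
        Finset.sum_range_succ' (fun i => d (i + 1)) n
      have hb1 : ∑ i ∈ Finset.range n, d (i + 1) ≤ A := by
        have := mono (n + 1) (n + 2) (by omega)
        rw [e2] at this
        have h0 := hd0 0
        linarith
      have hb0 : ∑ i ∈ Finset.range n, d i ≤ A := mono n (n + 2) (by omega)
      have step : ∑ i ∈ Finset.range n, d (i + 2)
          ≤ β * ∑ i ∈ Finset.range n, d (i + 1) + γ * ∑ i ∈ Finset.range n, d i
            + B * (∑ i ∈ Finset.range n, η (i + 2) + ∑ i ∈ Finset.range n, η (i + 1)) := by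
        calc ∑ i ∈ Finset.range n, d (i + 2)
            ≤ ∑ i ∈ Finset.range n, (β * d (i + 1) + γ * d i + B * (η (i + 2) + η (i + 1))) :=
              Finset.sum_le_sum (fun i _ => h1 i)
          _ = β * ∑ i ∈ Finset.range n, d (i + 1) + γ * ∑ i ∈ Finset.range n, d i
              + B * (∑ i ∈ Finset.range n, η (i + 2) + ∑ i ∈ Finset.range n, η (i + 1)) := by
              simp [Finset.sum_add_distrib, Finset.mul_sum, mul_add]
              try ring
      have hηa := hηle 2 n
      have hηb := hηle 1 n
      have hbb1 : β * ∑ i ∈ Finset.range n, d (i + 1) ≤ β * A :=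
        mul_le_mul_of_nonneg_left hb1 hβ
      have hbb0 : γ * ∑ i ∈ Finset.range n, d i ≤ γ * A :=
        mul_le_mul_of_nonneg_left hb0 hγ
      have hbη : B * (∑ i ∈ Finset.range n, η (i + 2) + ∑ i ∈ Finset.range n, η (i + 1))
          ≤ B * (T + T) := by
        apply mul_le_mul_of_nonneg_left _ hB.le
        linarith
      have final : (1 - (β + γ)) * A ≤ d 0 + d 1 + 2 * (B * T) := by
        have : A ≤ d 0 + d 1 + (β * A + γ * A + B * (T + T)) := by
          rw [e1, e1']
          have := step
          nlinarith [hbb1, hbb0, hbη]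
        nlinarith
      have hAK : A ≤ (d 0 + d 1 + 2 * (B * T)) / (1 - (β + γ)) := by
        rw [le_div_iff₀ hden]; linarith [final]
      exact hAK
    intro n
    match n with
    | 0 =>
      have := main 0
      have : (0:ℝ) ≤ K := le_trans (by positivity) (le_trans (mono 0 2 (by omega)) (main 0))
      simpa using this
    | 1 => exact le_trans (mono 1 3 (by omega)) (main 1)
    | (m + 2) => exact main m
  have hsummable : Summable d :=
    summable_of_sum_range_le hd0 hsum_bound
  have hcauchy : CauchySeq F := cauchySeq_of_summable_dist hsummable
  exact ⟨hcauchy, cauchySeq_tendsto_of_complete hcauchy⟩
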